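/- Let G be a finite simple graph with vertex set V. For every vertex v: the sum over all neighbors a of v of binomial(n3(v,a), 2) equals F9'(v) + 3·F10(v). -/

import Mathlib

open Finset
open scoped Classical

namespace FourProfiles

variable {V : Type*} [Fintype V] [DecidableEq V]

/-- Number of 3-element subsets of `V \ {v}` admitting a labeling `a, b, c` satisfying `P`. -/
noncomputable def cnt3 (v : V) (P : V → V → V → Prop) : ℕ :=
  (((Finset.univ : Finset V).powersetCard 3).filter
    (fun s => v ∉ s ∧ ∃ a ∈ s, ∃ b ∈ s, ∃ c ∈ s, s = {a, b, c} ∧ P a b c)).card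

variable (G : SimpleGraph V)

/-- Induced subgraph on `{v,a,b,c}` has exactly one edge, with `v` an endpoint. -/
noncomputable def F1 (v : V) : ℕ := cnt3 v fun a b c =>
  G.Adj v a ∧ ¬G.Adj v b ∧ ¬G.Adj v c ∧ ¬G.Adj a b ∧ ¬G.Adj a c ∧ ¬G.Adj b c

/-- Induced subgraph on `{v,a,b,c}` is a perfect matching (two disjoint edges). -/
noncomputable def F2 (v : V) : ℕ := cnt3 v fun a b c =>
  G.Adj v a ∧ G.Adj b c ∧ ¬G.Adj v b ∧ ¬G.Adj v c ∧ ¬G.Adj a b ∧ ¬G.Adj a c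

/-- Two-edge path plus isolated vertex, `v` an endpoint of the path. -/
noncomputable def F3 (v : V) : ℕ := cnt3 v fun a b c =>
  G.Adj v a ∧ G.Adj a b ∧ ¬G.Adj v b ∧ ¬G.Adj v c ∧ ¬G.Adj a c ∧ ¬G.Adj b c

/-- Two-edge path plus isolated vertex, `v` the middle vertex of the path. -/
noncomputable def F3' (v : V) : ℕ := cnt3 v fun a b c =>
  G.Adj v a ∧ G.Adj v b ∧ ¬G.Adj a b ∧ ¬G.Adj v c ∧ ¬G.Adj a c ∧ ¬G.Adj b c

/-- Path on four vertices, `v` an endpoint. -/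
noncomputable def F4 (v : V) : ℕ := cnt3 v fun a b c =>
  G.Adj v a ∧ G.Adj a b ∧ G.Adj b c ∧ ¬G.Adj v b ∧ ¬G.Adj v c ∧ ¬G.Adj a c

/-- Path on four vertices, `v` an internal (degree-2) vertex. -/
noncomputable def F4' (v : V) : ℕ := cnt3 v fun a b c =>
  G.Adj v a ∧ G.Adj v b ∧ G.Adj b c ∧ ¬G.Adj a b ∧ ¬G.Adj v c ∧ ¬G.Adj a c

/-- Triangle plus isolated vertex, `v` in the triangle. -/
noncomputable def F5 (v : V) : ℕ := cnt3 v fun a b c =>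
  G.Adj v a ∧ G.Adj v b ∧ G.Adj a b ∧ ¬G.Adj v c ∧ ¬G.Adj a c ∧ ¬G.Adj b c

/-- Star `K_{1,3}`, `v` a leaf. -/
noncomputable def F6 (v : V) : ℕ := cnt3 v fun a b c =>
  G.Adj v a ∧ G.Adj a b ∧ G.Adj a c ∧ ¬G.Adj v b ∧ ¬G.Adj v c ∧ ¬G.Adj b c

/-- Star `K_{1,3}`, `v` the center. -/
noncomputable def F6' (v : V) : ℕ := cnt3 v fun a b c =>
  G.Adj v a ∧ G.Adj v b ∧ G.Adj v c ∧ ¬G.Adj a b ∧ ¬G.Adj a c ∧ ¬G.Adj b c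

/-- 4-cycle. -/
noncomputable def F7 (v : V) : ℕ := cnt3 v fun a b c =>
  G.Adj v a ∧ G.Adj a b ∧ G.Adj b c ∧ G.Adj v c ∧ ¬G.Adj v b ∧ ¬G.Adj a c

/-- Paw (triangle with a pendant edge), `v` the pendant (degree-1) vertex. -/
noncomputable def F8 (v : V) : ℕ := cnt3 v fun a b c =>
  G.Adj v a ∧ G.Adj a b ∧ G.Adj a c ∧ G.Adj b c ∧ ¬G.Adj v b ∧ ¬G.Adj v c

/-- Paw, `v` the degree-3 vertex. -/
noncomputable def F8' (v : V) : ℕ := cnt3 v fun a b c =>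
  G.Adj v a ∧ G.Adj v b ∧ G.Adj a b ∧ G.Adj v c ∧ ¬G.Adj a c ∧ ¬G.Adj b c

/-- Paw, `v` one of the two degree-2 vertices. -/
noncomputable def F8'' (v : V) : ℕ := cnt3 v fun a b c =>
  G.Adj v a ∧ G.Adj v b ∧ G.Adj a b ∧ G.Adj a c ∧ ¬G.Adj v c ∧ ¬G.Adj b c

/-- Diamond (`K4` minus one edge), `v` one of the two degree-2 vertices. -/
noncomputable def F9 (v : V) : ℕ := cnt3 v fun a b c =>
  G.Adj v a ∧ G.Adj v b ∧ G.Adj a b ∧ G.Adj a c ∧ G.Adj b c ∧ ¬G.Adj v c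

/-- Diamond, `v` one of the two degree-3 vertices. -/
noncomputable def F9' (v : V) : ℕ := cnt3 v fun a b c =>
  G.Adj v a ∧ G.Adj v b ∧ G.Adj v c ∧ G.Adj a b ∧ G.Adj a c ∧ ¬G.Adj b c

/-- Complete graph `K4`. -/
noncomputable def F10 (v : V) : ℕ := cnt3 v fun a b c =>
  G.Adj v a ∧ G.Adj v b ∧ G.Adj v c ∧ G.Adj a b ∧ G.Adj a c ∧ G.Adj b c

/-- `|V \ (Γ(v) ∪ Γ(a))|`. -/
noncomputable def n1e (v a : V) : ℕ :=
  (Finset.univ.filter fun x => ¬G.Adj v x ∧ ¬G.Adj a x).card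

/-- `|Γ(v) \ (Γ(a) ∪ {a})|`. -/
noncomputable def n2c (v a : V) : ℕ :=
  (Finset.univ.filter fun x => G.Adj v x ∧ ¬G.Adj a x ∧ x ≠ a).card

/-- `|Γ(a) \ (Γ(v) ∪ {v})|`. -/
noncomputable def n2e (v a : V) : ℕ :=
  (Finset.univ.filter fun x => G.Adj a x ∧ ¬G.Adj v x ∧ x ≠ v).card

/-- `|Γ(v) ∩ Γ(a)|`. -/
noncomputable def n3 (v a : V) : ℕ :=
  (Finset.univ.filter fun x => G.Adj v x ∧ G.Adj a x).card

/-- Number of edges of `G` with neither endpoint in `Γ(v) ∪ {v}`. -/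
noncomputable def n1d (v : V) : ℕ :=
  (((Finset.univ : Finset V).powersetCard 2).filter
    (fun s => ∃ a ∈ s, ∃ b ∈ s, s = {a, b} ∧ G.Adj a b ∧
      ¬G.Adj v a ∧ ¬G.Adj v b ∧ a ≠ v ∧ b ≠ v)).card

/-- Number of triangles of `G` containing `a`. -/
noncomputable def tri (a : V) : ℕ :=
  (((Finset.univ : Finset V).powersetCard 2).filter
    (fun s => ∃ x ∈ s, ∃ y ∈ s, s = {x, y} ∧ G.Adj a x ∧ G.Adj a y ∧ G.Adj x y)).card

/-- Number of 2-element subsets `{x,y}` of `V \ {a}` inducing a two-edge path with `a`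
an endpoint. -/
noncomputable def twoPathEnd (a : V) : ℕ :=
  (((Finset.univ : Finset V).powersetCard 2).filter
    (fun s => a ∉ s ∧ ∃ x ∈ s, ∃ y ∈ s, s = {x, y} ∧ G.Adj a x ∧ G.Adj x y ∧ ¬G.Adj a y)).card

/-- Number of 2-element subsets `{b,c} ⊆ Γ(a)` with `b` adjacent to `c`, `b ∈ Γ(v)`,
`c ∈ Γ(v)`. -/
noncomputable def triIn (v a : V) : ℕ :=
  (((Finset.univ : Finset V).powersetCard 2).filter
    (fun s => ∃ b ∈ s, ∃ c ∈ s, s = {b, c} ∧ G.Adj a b ∧ G.Adj a c ∧ G.Adj b c ∧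
      G.Adj v b ∧ G.Adj v c)).card

/-- Number of 2-element subsets `{b,c} ⊆ Γ(a)` with `b` adjacent to `c`, `b ∉ Γ(v)`,
`c ∉ Γ(v)`. -/
noncomputable def triOut (v a : V) : ℕ :=
  (((Finset.univ : Finset V).powersetCard 2).filter
    (fun s => ∃ b ∈ s, ∃ c ∈ s, s = {b, c} ∧ G.Adj a b ∧ G.Adj a c ∧ G.Adj b c ∧
      ¬G.Adj v b ∧ ¬G.Adj v c)).card


section Aux5

private noncomputable def pairSet (v : V) (R : V → V → Prop) : Finset (V × Finset V) :=
  ((Finset.univ : Finset V) ×ˢ (Finset.univ : Finset V).powersetCard 2).filter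
    (fun p => G.Adj v p.1 ∧ ∃ b ∈ p.2, ∃ c ∈ p.2, p.2 = {b, c} ∧
      G.Adj v b ∧ G.Adj v c ∧ G.Adj p.1 b ∧ G.Adj p.1 c ∧ R b c)

private noncomputable def sSet (v a : V) (R : V → V → Prop) : Finset (Finset V) :=
  ((Finset.univ : Finset V).powersetCard 2).filter
    (fun s => ∃ b ∈ s, ∃ c ∈ s, s = {b, c} ∧
      G.Adj v b ∧ G.Adj v c ∧ G.Adj a b ∧ G.Adj a c ∧ R b c)

private noncomputable def tSet (v : V) (P : V → V → V → Prop) : Finset (Finset V) :=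
  (((Finset.univ : Finset V).powersetCard 3).filter
    (fun s => v ∉ s ∧ ∃ a ∈ s, ∃ b ∈ s, ∃ c ∈ s, s = {a, b, c} ∧ P a b c))

private lemma cnt3_eq (v : V) (P : V → V → V → Prop) : cnt3 v P = (tSet v P).card := rfl

private lemma mem_pairSet {v : V} {R : V → V → Prop} {p : V × Finset V} :
    p ∈ pairSet G v R ↔ p.2.card = 2 ∧ G.Adj v p.1 ∧ ∃ b ∈ p.2, ∃ c ∈ p.2, p.2 = {b, c} ∧
      G.Adj v b ∧ G.Adj v c ∧ G.Adj p.1 b ∧ G.Adj p.1 c ∧ R b c := by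
  simp [pairSet, Finset.mem_powersetCard_univ, and_assoc]

private lemma mem_sSet {v a : V} {R : V → V → Prop} {s : Finset V} :
    s ∈ sSet G v a R ↔ s.card = 2 ∧ ∃ b ∈ s, ∃ c ∈ s, s = {b, c} ∧
      G.Adj v b ∧ G.Adj v c ∧ G.Adj a b ∧ G.Adj a c ∧ R b c := by
  simp [sSet, Finset.mem_powersetCard_univ]

private lemma mem_tSet {v : V} {P : V → V → V → Prop} {s : Finset V} :
    s ∈ tSet v P ↔ s.card = 3 ∧ v ∉ s ∧ ∃ a ∈ s, ∃ b ∈ s, ∃ c ∈ s, s = {a, b, c} ∧ P a b c := by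
  simp [tSet, Finset.mem_powersetCard_univ, and_assoc]

private lemma choose_split (v a : V) :
    (n3 G v a).choose 2 = (sSet G v a (fun b c => ¬ G.Adj b c)).card
      + (sSet G v a (fun b c => G.Adj b c)).card := by
  classical
  have hn3 : n3 G v a = (Finset.univ.filter fun x => G.Adj v x ∧ G.Adj a x).card := rfl
  have hunion : (Finset.univ.filter fun x => G.Adj v x ∧ G.Adj a x).powersetCard 2
      = sSet G v a (fun b c => ¬ G.Adj b c) ∪ sSet G v a (fun b c => G.Adj b c) := by
    ext s
    rw [Finset.mem_union, mem_sSet, mem_sSet, Finset.mem_powersetCard]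
    constructor
    · rintro ⟨hsub, hcard⟩
      obtain ⟨b, c, hbc, rfl⟩ := Finset.card_eq_two.mp hcard
      have hb : b ∈ ({b, c} : Finset V) := Finset.mem_insert_self _ _
      have hc : c ∈ ({b, c} : Finset V) := Finset.mem_insert_of_mem (Finset.mem_singleton_self _)
      obtain ⟨hvb, hab⟩ := (Finset.mem_filter.mp (hsub hb)).2
      obtain ⟨hvc, hac⟩ := (Finset.mem_filter.mp (hsub hc)).2
      by_cases h : G.Adj b c
      · exact Or.inr ⟨hcard, b, hb, c, hc, rfl, hvb, hvc, hab, hac, h⟩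
      · exact Or.inl ⟨hcard, b, hb, c, hc, rfl, hvb, hvc, hab, hac, h⟩
    · rintro (⟨hcard, b, hb, c, hc, rfl, hvb, hvc, hab, hac, -⟩ |
              ⟨hcard, b, hb, c, hc, rfl, hvb, hvc, hab, hac, -⟩) <;>
      · refine ⟨?_, hcard⟩
        intro x hx
        rcases Finset.mem_insert.mp hx with rfl | hx
        · exact Finset.mem_filter.mpr ⟨Finset.mem_univ _, hvb, hab⟩
        · rw [Finset.mem_singleton] at hx; subst hx
          exact Finset.mem_filter.mpr ⟨Finset.mem_univ _, hvc, hac⟩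
  have hdisj : Disjoint (sSet G v a (fun b c => ¬ G.Adj b c))
      (sSet G v a (fun b c => G.Adj b c)) := by
    rw [Finset.disjoint_left]
    rintro s hs1 hs2
    rw [mem_sSet] at hs1 hs2
    obtain ⟨-, b, hb, c, hc, rfl, -, -, -, -, hn⟩ := hs1
    obtain ⟨-, b', hb', c', hc', -, -, -, -, -, ha'⟩ := hs2
    have hne : b' ≠ c' := G.ne_of_adj ha'
    have hmem : ∀ x ∈ ({b, c} : Finset V), x = b ∨ x = c := by
      intro x hx
      rcases Finset.mem_insert.mp hx with h | h
      · exact Or.inl h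
      · exact Or.inr (Finset.mem_singleton.mp h)
    rcases hmem b' hb' with rfl | rfl <;> rcases hmem c' hc' with rfl | rfl
    · exact hne rfl
    · exact hn ha'
    · exact hn (G.adj_symm ha')
    · exact hne rfl
  rw [hn3, ← Finset.card_powersetCard, hunion, Finset.card_union_of_disjoint hdisj]

private lemma sum_sSet [DecidableRel G.Adj] (v : V) (R : V → V → Prop) :
    ∑ a ∈ G.neighborFinset v, (sSet G v a R).card = (pairSet G v R).card := by
  classical
  have hmaps : ∀ p ∈ pairSet G v R, p.1 ∈ G.neighborFinset v := by
    intro p hp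
    rw [SimpleGraph.mem_neighborFinset]
    exact ((mem_pairSet G).mp hp).2.1
  rw [Finset.card_eq_sum_card_fiberwise hmaps]
  refine Finset.sum_congr rfl fun a ha => ?_
  have hva : G.Adj v a := by rwa [SimpleGraph.mem_neighborFinset] at ha
  have him : Finset.filter (fun p => p.1 = a) (pairSet G v R)
      = Finset.image (fun s => (a, s)) (sSet G v a R) := by
    ext p
    constructor
    · intro hp
      obtain ⟨hp, hfst⟩ := Finset.mem_filter.mp hp
      rw [mem_pairSet] at hp
      obtain ⟨hcard, -, hrest⟩ := hp
      rw [hfst] at hrest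
      exact Finset.mem_image.mpr ⟨p.2, (mem_sSet G).mpr ⟨hcard, hrest⟩,
        Prod.ext hfst.symm rfl⟩
    · intro hp
      obtain ⟨s, hs, rfl⟩ := Finset.mem_image.mp hp
      rw [mem_sSet] at hs
      exact Finset.mem_filter.mpr ⟨(mem_pairSet G).mpr ⟨hs.1, hva, hs.2⟩, rfl⟩
  rw [him, Finset.card_image_of_injective _ (fun s t h => congrArg Prod.snd h)]

private lemma pair_mem_cases {b c x : V} (hx : x ∈ ({b, c} : Finset V)) : x = b ∨ x = c := by
  rcases Finset.mem_insert.mp hx with h | h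
  · exact Or.inl h
  · exact Or.inr (Finset.mem_singleton.mp h)

private lemma fst_not_mem {v : V} {R : V → V → Prop} {p : V × Finset V}
    (hp : p ∈ pairSet G v R) : p.1 ∉ p.2 := by
  obtain ⟨-, -, b, hb, c, hc, hs, -, -, hab, hac, -⟩ := (mem_pairSet G).mp hp
  rw [hs]
  intro h
  rcases pair_mem_cases h with rfl | rfl
  · exact G.irrefl hab
  · exact G.irrefl hac

private lemma pairSet_maps {v : V} {R : V → V → Prop}
    (hR : ∀ b c, R b c → (G.Adj b c ∨ ¬ G.Adj b c)) {p : V × Finset V}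
    (hp : p ∈ pairSet G v R) : (insert p.1 p.2).card = 3 ∧ v ∉ insert p.1 p.2 := by
  obtain ⟨hcard, hva, b, hb, c, hc, hs, hvb, hvc, hab, hac, -⟩ := (mem_pairSet G).mp hp
  have hnm := fst_not_mem G hp
  constructor
  · rw [Finset.card_insert_of_notMem hnm, hcard]
  · intro hv
    rcases Finset.mem_insert.mp hv with rfl | hv
    · exact G.irrefl hva
    · rw [hs] at hv
      rcases pair_mem_cases hv with rfl | rfl
      · exact G.irrefl hvb
      · exact G.irrefl hvc

private lemma pairSet_notadj_card (v : V) :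
    (pairSet G v (fun b c => ¬ G.Adj b c)).card
      = (tSet v (fun a b c => G.Adj v a ∧ G.Adj v b ∧ G.Adj v c ∧
          G.Adj a b ∧ G.Adj a c ∧ ¬G.Adj b c)).card := by
  classical
  refine Finset.card_nbij (fun p => insert p.1 p.2) ?_ ?_ ?_
  · intro p hp
    obtain ⟨h3, hv⟩ := pairSet_maps G (fun _ _ _ => em _) hp
    obtain ⟨hcard, hva, b, hb, c, hc, hs, hvb, hvc, hab, hac, hbc⟩ := (mem_pairSet G).mp hp
    refine (mem_tSet).mpr ⟨h3, hv, p.1, Finset.mem_insert_self _ _,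
      b, Finset.mem_insert_of_mem hb, c, Finset.mem_insert_of_mem hc,
      by show insert p.1 p.2 = {p.1, b, c}; rw [hs], hva, hvb, hvc, hab, hac, hbc⟩
  · intro p hp q hq heq
    replace heq : insert p.1 p.2 = insert q.1 q.2 := heq
    rw [Finset.mem_coe] at hp hq
    obtain ⟨hcardp, hvap, b, hb, c, hc, hsp, hvb, hvc, hab, hac, hbc⟩ := (mem_pairSet G).mp hp
    obtain ⟨hcardq, hvaq, b', hb', c', hc', hsq, hvb', hvc', hab', hac', hbc'⟩ :=
      (mem_pairSet G).mp hq
    have hnmp := fst_not_mem G hp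
    have hnmq := fst_not_mem G hq
    have hbcne : b ≠ c := by
      intro h
      rw [hsp, h] at hcardp
      simp at hcardp
    -- q.1 is adjacent to every element of q.2
    have hqadj : ∀ w ∈ q.2, G.Adj q.1 w := by
      intro w hw
      rw [hsq] at hw
      rcases pair_mem_cases hw with rfl | rfl
      · exact hab'
      · exact hac'
    have hfst : q.1 = p.1 := by
      have hq1 : q.1 ∈ insert p.1 p.2 := by rw [heq]; exact Finset.mem_insert_self _ _
      rcases Finset.mem_insert.mp hq1 with h | h
      · exact h
      · rw [hsp] at h
        rcases pair_mem_cases h with rfl | rfl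
        · -- q.1 = b : then c ∈ q.2 and Adj q.1 c = Adj b c, contradiction
          have hc2 : c ∈ p.2 := by
            rw [hsp]
            exact Finset.mem_insert_of_mem (Finset.mem_singleton_self _)
          have hci : c ∈ insert q.1 q.2 := by
            rw [← heq]
            exact Finset.mem_insert_of_mem hc2
          have hcq : c ∈ q.2 := by
            rcases Finset.mem_insert.mp hci with h' | h'
            · exact absurd h'.symm hbcne
            · exact h'
          exact absurd (hqadj c hcq) hbc
        · have hb2 : b ∈ p.2 := by
            rw [hsp]
            exact Finset.mem_insert_self _ _
          have hbi : b ∈ insert q.1 q.2 := by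
            rw [← heq]
            exact Finset.mem_insert_of_mem hb2
          have hbq : b ∈ q.2 := by
            rcases Finset.mem_insert.mp hbi with h' | h'
            · exact absurd h' hbcne
            · exact h'
          exact absurd (G.adj_symm (hqadj b hbq)) hbc
    have hsnd : p.2 = q.2 := by
      have h := congrArg (fun s : Finset V => Finset.erase s p.1) heq
      simp only [Finset.erase_insert hnmp] at h
      rw [← hfst, Finset.erase_insert hnmq] at h
      exact h
    exact Prod.ext hfst.symm hsnd
  · intro t ht
    rw [Finset.mem_coe, mem_tSet] at ht
    obtain ⟨hcard, hvt, a, hat, b, hbt, c, hct, hteq, hva, hvb, hvc, hab, hac, hbc⟩ := ht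
    have hbcne : b ≠ c := by
      rintro rfl
      rw [hteq] at hcard
      have : ({a, b, b} : Finset V).card ≤ 2 := by
        refine (Finset.card_insert_le _ _).trans ?_
        simp
      omega
    refine ⟨(a, {b, c}), Finset.mem_coe.mpr ((mem_pairSet G).mpr ⟨?_, hva,
      b, Finset.mem_insert_self _ _, c, Finset.mem_insert_of_mem (Finset.mem_singleton_self _),
      rfl, hvb, hvc, hab, hac, hbc⟩), ?_⟩
    · exact Finset.card_pair hbcne
    · show insert a {b, c} = t
      rw [hteq]

private lemma pairSet_adj_fiber (v : V) {t : Finset V}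
    (ht : t ∈ tSet v (fun a b c => G.Adj v a ∧ G.Adj v b ∧ G.Adj v c ∧
        G.Adj a b ∧ G.Adj a c ∧ G.Adj b c)) :
    (Finset.filter (fun p => insert p.1 p.2 = t)
      (pairSet G v (fun b c => G.Adj b c))).card = 3 := by
  classical
  obtain ⟨hcard, hvt, x, hx, y, hy, z, hz, hteq, hvx, hvy, hvz, hxy, hxz, hyz⟩ :=
    (mem_tSet).mp ht
  have hall1 : ∀ u ∈ t, G.Adj v u := by
    intro u hu
    rw [hteq] at hu
    rcases Finset.mem_insert.mp hu with rfl | hu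
    · exact hvx
    rcases pair_mem_cases hu with rfl | rfl
    · exact hvy
    · exact hvz
  have hall2 : ∀ u ∈ t, ∀ w ∈ t, u ≠ w → G.Adj u w := by
    intro u hu w hw hne
    rw [hteq] at hu hw
    rcases Finset.mem_insert.mp hu with rfl | hu
    · rcases Finset.mem_insert.mp hw with rfl | hw
      · exact absurd rfl hne
      rcases pair_mem_cases hw with rfl | rfl
      · exact hxy
      · exact hxz
    rcases pair_mem_cases hu with rfl | rfl
    · rcases Finset.mem_insert.mp hw with rfl | hw
      · exact G.adj_symm hxy
      rcases pair_mem_cases hw with rfl | rfl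
      · exact absurd rfl hne
      · exact hyz
    · rcases Finset.mem_insert.mp hw with rfl | hw
      · exact G.adj_symm hxz
      rcases pair_mem_cases hw with rfl | rfl
      · exact G.adj_symm hyz
      · exact absurd rfl hne
  have him : Finset.filter (fun p => insert p.1 p.2 = t)
      (pairSet G v (fun b c => G.Adj b c))
      = Finset.image (fun a => (a, t.erase a)) t := by
    ext p
    constructor
    · intro hp
      obtain ⟨hp, hins⟩ := Finset.mem_filter.mp hp
      have hnm := fst_not_mem G hp
      have h1 : p.1 ∈ t := by rw [← hins]; exact Finset.mem_insert_self _ _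
      have h2 : t.erase p.1 = p.2 := by rw [← hins, Finset.erase_insert hnm]
      exact Finset.mem_image.mpr ⟨p.1, h1, Prod.ext rfl h2⟩
    · intro hp
      obtain ⟨a, hat, rfl⟩ := Finset.mem_image.mp hp
      have hec : (t.erase a).card = 2 := by
        rw [Finset.card_erase_of_mem hat, hcard]
      obtain ⟨b, c, hbc, hbceq⟩ := Finset.card_eq_two.mp hec
      have hbe : b ∈ t.erase a := by rw [hbceq]; exact Finset.mem_insert_self _ _
      have hce : c ∈ t.erase a := by
        rw [hbceq]; exact Finset.mem_insert_of_mem (Finset.mem_singleton_self _)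
      obtain ⟨hba, hbmem⟩ := Finset.mem_erase.mp hbe
      obtain ⟨hca, hcmem⟩ := Finset.mem_erase.mp hce
      refine Finset.mem_filter.mpr ⟨(mem_pairSet G).mpr ⟨hec, hall1 a hat,
        b, hbe, c, hce, hbceq, hall1 b hbmem, hall1 c hcmem,
        hall2 a hat b hbmem (Ne.symm hba), hall2 a hat c hcmem (Ne.symm hca),
        hall2 b hbmem c hcmem hbc⟩, ?_⟩
      exact Finset.insert_erase hat
  rw [him, Finset.card_image_of_injective _ (fun a b h => congrArg Prod.fst h), hcard]

private lemma pairSet_adj_card (v : V) :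
    (pairSet G v (fun b c => G.Adj b c)).card
      = 3 * (tSet v (fun a b c => G.Adj v a ∧ G.Adj v b ∧ G.Adj v c ∧
          G.Adj a b ∧ G.Adj a c ∧ G.Adj b c)).card := by
  classical
  have hmaps : ∀ p ∈ pairSet G v (fun b c => G.Adj b c),
      insert p.1 p.2 ∈ tSet v (fun a b c => G.Adj v a ∧ G.Adj v b ∧ G.Adj v c ∧
        G.Adj a b ∧ G.Adj a c ∧ G.Adj b c) := by
    intro p hp
    obtain ⟨h3, hv⟩ := pairSet_maps G (fun _ _ _ => em _) hp
    obtain ⟨hcard, hva, b, hb, c, hc, hs, hvb, hvc, hab, hac, hbc⟩ := (mem_pairSet G).mp hp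
    exact (mem_tSet).mpr ⟨h3, hv, p.1, Finset.mem_insert_self _ _,
      b, Finset.mem_insert_of_mem hb, c, Finset.mem_insert_of_mem hc,
      by rw [hs], hva, hvb, hvc, hab, hac, hbc⟩
  rw [Finset.card_eq_sum_card_fiberwise hmaps]
  rw [Finset.sum_congr rfl (fun t ht => pairSet_adj_fiber G v ht)]
  rw [Finset.sum_const, smul_eq_mul, mul_comm]

end Aux5

theorem statement5 [DecidableRel G.Adj] (v : V) :
    ∑ a ∈ G.neighborFinset v, Nat.choose (n3 G v a) 2 = F9' G v + 3 * F10 G v := by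
  classical
  calc ∑ a ∈ G.neighborFinset v, Nat.choose (n3 G v a) 2
      = ∑ a ∈ G.neighborFinset v, ((sSet G v a (fun b c => ¬G.Adj b c)).card
          + (sSet G v a (fun b c => G.Adj b c)).card) :=
        Finset.sum_congr rfl fun a _ => choose_split G v a
    _ = (pairSet G v (fun b c => ¬G.Adj b c)).card
          + (pairSet G v (fun b c => G.Adj b c)).card := by
        rw [Finset.sum_add_distrib, sum_sSet, sum_sSet]
    _ = F9' G v + 3 * F10 G v := by
        rw [pairSet_notadj_card, pairSet_adj_card]
        rw [show F9' G v = cnt3 v (fun a b c => G.Adj v a ∧ G.Adj v b ∧ G.Adj v c ∧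
          G.Adj a b ∧ G.Adj a c ∧ ¬G.Adj b c) from rfl]
        rw [show F10 G v = cnt3 v (fun a b c => G.Adj v a ∧ G.Adj v b ∧ G.Adj v c ∧
          G.Adj a b ∧ G.Adj a c ∧ G.Adj b c) from rfl]
        rw [cnt3_eq, cnt3_eq]


end FourProfiles
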